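/- Let D be a family of dense subsets of a topological space X. Then X is D-forced (every dense subset of X includes a D-mosaic) if and only if every somewhere dense subset of X includes a D-piece, i.e. a set of the form D ∩ U with D ∈ D and U nonempty open. -/
import Mathlib


open Cardinal Set

universe u

variable {X : Type u} [TopologicalSpace X]

/-- A `(𝒟,X)`-piece: a set of the form `D ∩ U` with `D ∈ 𝒟` and `U` nonempty open. -/
def IsPiece (𝒟 : Set (Set X)) (P : Set X) : Prop :=
  ∃ D ∈ 𝒟, ∃ U : Set X, IsOpen U ∧ U.Nonempty ∧ P = D ∩ U

/-- A `(𝒟,X)`-mosaic: `⋃ {V ∩ D_V : V ∈ 𝒱}` where `𝒱` is a maximal disjoint family of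
open sets (maximality being equivalent to `⋃₀ 𝒱` being dense) and each `D_V ∈ 𝒟`. -/
def IsMosaic (𝒟 : Set (Set X)) (M : Set X) : Prop :=
  ∃ (𝒱 : Set (Set X)) (f : Set X → Set X),
    (∀ V ∈ 𝒱, IsOpen V) ∧ 𝒱.PairwiseDisjoint id ∧ Dense (⋃₀ 𝒱) ∧
    (∀ V ∈ 𝒱, f V ∈ 𝒟) ∧ M = ⋃ V ∈ 𝒱, V ∩ f V

/-- `X` is `𝒟`-forced iff every dense subset of `X` includes a `𝒟`-mosaic. -/
def DForced (𝒟 : Set (Set X)) : Prop :=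
  ∀ S : Set X, Dense S → ∃ M ⊆ S, IsMosaic 𝒟 M

/-- `X` is `𝒟`-forced iff every somewhere dense subset of `X` includes a `𝒟`-piece. -/
theorem stmt_3 (𝒟 : Set (Set X)) (h𝒟 : ∀ D ∈ 𝒟, Dense D) :
    DForced 𝒟 ↔ ∀ S : Set X, ¬ IsNowhereDense S → ∃ P ⊆ S, IsPiece 𝒟 P := by
  classical
  constructor
  · -- forced → pieces
    intro hF S hS
    have hW : (interior (closure S)).Nonempty := by
      rw [nonempty_iff_ne_empty]; exact hS
    have hT : Dense (S ∪ (closure S)ᶜ) := by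
      intro x
      rw [closure_union]
      by_cases hx : x ∈ closure S
      · exact Or.inl hx
      · exact Or.inr (subset_closure hx)
    obtain ⟨M, hMS, 𝒱, f, hopen, hdisj, hdense, hf, hM⟩ := hF _ hT
    obtain ⟨x, hxW, hx⟩ := hdense.inter_open_nonempty _ isOpen_interior hW
    obtain ⟨V, hV𝒱, hxV⟩ := hx
    refine ⟨f V ∩ (V ∩ interior (closure S)), ?_, f V, hf V hV𝒱,
      V ∩ interior (closure S), (hopen V hV𝒱).inter isOpen_interior, ⟨x, hxV, hxW⟩, rfl⟩
    rintro y ⟨hyf, hyV, hyW⟩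
    have hyM : y ∈ M := by
      rw [hM]; exact mem_biUnion hV𝒱 ⟨hyV, hyf⟩
    rcases hMS hyM with h | h
    · exact h
    · exact absurd (interior_subset hyW) h
  · -- pieces → forced
    intro hP S hS
    set PP : Set (Set X) := {V | IsOpen V ∧ V.Nonempty ∧ ∃ D ∈ 𝒟, D ∩ V ⊆ S} with hPP
    obtain ⟨𝒱, h𝒱⟩ : ∃ 𝒱, Maximal (· ∈ {𝒱 | 𝒱 ⊆ PP ∧ 𝒱.PairwiseDisjoint id}) 𝒱 := by
      apply zorn_subset
      intro c hc hchain
      refine ⟨⋃₀ c, ⟨?_, ?_⟩, fun s hs => subset_sUnion_of_mem hs⟩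
      · rintro V ⟨t, htc, hVt⟩; exact (hc htc).1 hVt
      · rintro a ⟨ta, hta, haa⟩ b ⟨tb, htb, hbb⟩ hab
        rcases hchain.total hta htb with h | h
        · exact (hc htb).2 (h haa) hbb hab
        · exact (hc hta).2 haa (h hbb) hab
    have h𝒱PP : 𝒱 ⊆ PP := h𝒱.prop.1
    have hd : Dense (⋃₀ 𝒱) := by
      by_contra hd
      rw [dense_iff_closure_eq] at hd
      have hG : ((closure (⋃₀ 𝒱))ᶜ).Nonempty := nonempty_compl.mpr hd
      set G := (closure (⋃₀ 𝒱))ᶜ with hGdef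
      have hGopen : IsOpen G := isClosed_closure.isOpen_compl
      have hSD : ¬ IsNowhereDense (S ∩ G) := by
        intro h
        have h1 : G ⊆ closure (G ∩ S) := hS.open_subset_closure_inter hGopen
        have h2 : G ⊆ interior (closure (S ∩ G)) :=
          hGopen.subset_interior_iff.mpr (by rwa [inter_comm] at h1)
        rw [h] at h2
        exact hG.ne_empty (subset_empty_iff.mp h2)
      obtain ⟨P, hPS, D, hD𝒟, U, hUopen, hUne, hPeq⟩ := hP _ hSD
      obtain ⟨z, hzU, hzD⟩ := (h𝒟 D hD𝒟).inter_open_nonempty _ hUopen hUne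
      have hzP : z ∈ P := hPeq ▸ ⟨hzD, hzU⟩
      have hzG : z ∈ G := (hPS hzP).2
      set V' := U ∩ G with hV'def
      have hV'PP : V' ∈ PP := by
        refine ⟨hUopen.inter hGopen, ⟨z, hzU, hzG⟩, D, hD𝒟, ?_⟩
        rintro y ⟨hyD, hyU, _⟩
        exact (hPS (hPeq ▸ ⟨hyD, hyU⟩)).1
      have hmem : 𝒱 ∪ {V'} ∈ {𝒱 | 𝒱 ⊆ PP ∧ 𝒱.PairwiseDisjoint id} := by
        constructor
        · rintro W (hW | hW)
          · exact h𝒱PP hW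
          · rw [mem_singleton_iff] at hW; rw [hW]; exact hV'PP
        · have hVdisj : ∀ W ∈ 𝒱, Disjoint V' W := by
            intro W hW
            refine Set.disjoint_left.mpr fun a ha haW => ?_
            exact ha.2 (subset_closure ⟨W, hW, haW⟩)
          rintro a (ha | ha) b (hb | hb) hab
          · exact h𝒱.prop.2 ha hb hab
          · rw [mem_singleton_iff] at hb; subst hb
            exact (hVdisj a ha).symm
          · rw [mem_singleton_iff] at ha; subst ha
            exact hVdisj b hb
          · rw [mem_singleton_iff] at ha hb; subst ha; subst hb; exact absurd rfl hab
      have hsub : 𝒱 ∪ {V'} ⊆ 𝒱 := h𝒱.2 hmem subset_union_left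
      have hV'𝒱 : V' ∈ 𝒱 := hsub (Or.inr rfl)
      exact hzG (subset_closure ⟨V', hV'𝒱, hzU, hzG⟩)
    -- build the mosaic
    let f : Set X → Set X := fun V => if h : ∃ D ∈ 𝒟, D ∩ V ⊆ S then h.choose else ∅
    have hfspec : ∀ V ∈ 𝒱, f V ∈ 𝒟 ∧ f V ∩ V ⊆ S := by
      intro V hV
      obtain ⟨-, -, hD⟩ := h𝒱PP hV
      simp only [f, dif_pos hD]
      exact ⟨hD.choose_spec.1, hD.choose_spec.2⟩
    refine ⟨⋃ V ∈ 𝒱, V ∩ f V, ?_, 𝒱, f, fun V hV => (h𝒱PP hV).1, h𝒱.prop.2, hd,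
      fun V hV => (hfspec V hV).1, rfl⟩
    rintro y hy
    simp only [mem_iUnion] at hy
    obtain ⟨V, hV, hyV, hyf⟩ := hy
    exact (hfspec V hV).2 ⟨hyf, hyV⟩
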